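/- Let Σ = {a^(1), e^(0)} and Δ = {d^(2), e^(0)}. Let M be the deterministic top-down tree transducer with the single state q0 and rules q0(a(x1)) → d(q0(x1), q0(x1)) and q0(e) → e, and let N be the deterministic top-down tree transducer with states p0 (initial) and p and rules p0(a(x1)) → p(x1), p0(e) → e, p(a(x1)) → d(p(x1), p(x1)), p(e) → d(e, e). Then M and N are equivalent and have height-balance bounded by 1, but they do not have bounded size-balance. -/

import Mathlib

/-! ## Finite ordered ranked trees -/

/-- Finite ordered labeled trees. -/
inductive RTree (α : Type) : Type
  | node : α → List (RTree α) → RTree α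

namespace RTree

variable {α β : Type}

/-- The label of the root node. -/
def label : RTree α → α
  | node a _ => a

mutual
  /-- The size (number of nodes) of a tree. -/
  def size : RTree α → ℕ
    | node _ ts => 1 + sizeList ts
  def sizeList : List (RTree α) → ℕ
    | [] => 0
    | t :: ts => size t + sizeList ts
end

mutual
  /-- The height of a tree (a leaf has height 1). -/
  def height : RTree α → ℕ
    | node _ ts => 1 + heightList ts
  def heightList : List (RTree α) → ℕ
    | [] => 0
    | t :: ts => max (height t) (heightList ts)
end

mutual
  /-- Relabeling of a tree. -/
  def map (f : α → β) : RTree α → RTree β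
    | node a ts => node (f a) (mapList f ts)
  def mapList (f : α → β) : List (RTree α) → List (RTree β)
    | [] => []
    | t :: ts => map f t :: mapList f ts
end

/-- `WF rk t` means `t` is a tree over the ranked alphabet with rank function `rk`:
every node labeled `a` has exactly `rk a` children.  Thus `T_Σ = {t | WF rk t}`. -/
inductive WF (rk : α → ℕ) : RTree α → Prop
  | node {a : α} {ts : List (RTree α)} :
      ts.length = rk a → (∀ t ∈ ts, WF rk t) → WF rk (node a ts)

/-- `SubtreeAt t u r`: `u` is (the Dewey path of) a node of `t` and `r` is the
subtree of `t` rooted at `u`. -/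
inductive SubtreeAt : RTree α → List ℕ → RTree α → Prop
  | here (t : RTree α) : SubtreeAt t [] t
  | child {a : α} {ts : List (RTree α)} {i : ℕ} {u : List ℕ} {ti r : RTree α} :
      ts[i]? = some ti → SubtreeAt ti u r → SubtreeAt (node a ts) (i :: u) r

/-- `ReplaceAt t u r t'`: `u` is a node of `t`, and `t'` is the tree `t[u ← r]`
obtained from `t` by replacing the subtree rooted at `u` by `r`. -/
inductive ReplaceAt : RTree α → List ℕ → RTree α → RTree α → Prop
  | here (t r : RTree α) : ReplaceAt t [] r r
  | child {a : α} {ts : List (RTree α)} {i : ℕ} {u : List ℕ} {r ti ti' : RTree α} :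
      ts[i]? = some ti → ReplaceAt ti u r ti' →
      ReplaceAt (node a ts) (i :: u) r (node a (ts.set i ti'))

end RTree

/-- A (complete) deterministic finite-state bottom-up tree automaton over the
alphabet `S`, with state set `P` and final states `final`. -/
structure BUA (S P : Type) where
  delta : S → List P → P
  final : Set P

variable {S P : Type}

mutual
  /-- The state reached by a bottom-up automaton on a tree. -/
  def buaRun (A : BUA S P) : RTree S → P
    | .node a ts => A.delta a (buaRunList A ts)
  def buaRunList (A : BUA S P) : List (RTree S) → List P
    | [] => []
    | t :: ts => buaRun A t :: buaRunList A ts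
end

/-- A tree language over the ranked alphabet `(S, rk)` is regular if it is recognized
by a deterministic finite-state bottom-up tree automaton. -/
def RegularTreeLang (rk : S → ℕ) (L : Set (RTree S)) : Prop :=
  ∃ (P : Type) (_ : Fintype P) (A : BUA S P),
    L = {t | RTree.WF rk t ∧ buaRun A t ∈ A.final}
/-! ## Deterministic macro tree transducers

A state of rank `m+1` is encoded by `prm q = m` (its number of context parameters).
Right-hand sides of rules are trees over `Δ ∪ Q ∪ X ∪ Y`, where every `Q`-labeled
node has an input variable `x_i` as its (implicit) first child; this is encoded by
the constructor `MRhs.call q i ps`.  A top-down tree transducer is exactly a macro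
tree transducer all of whose states have rank one (`prm q = 0`).

To be able to talk about partial inputs `s[u ← x]`, input trees are trees over
`Option S`, where `none` plays the role of the fresh rank-0 symbol `x`; an
ordinary input tree `s` is represented as `RTree.map some s`.  Outputs (sentential
forms) are trees over the alphabet `PL Q D`: output symbols `PL.out d`, unresolved
state calls `PL.st q` (i.e. `q(x, t₁, …, t_m)`, whose children are the current
parameter trees), and formal context parameters `PL.pr j` (i.e. `y_{j+1}`). -/

/-- Labels of sentential forms produced by a macro tree transducer. -/
inductive PL (Q D : Type) : Type
  | out : D → PL Q D
  | st : Q → PL Q D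
  | pr : ℕ → PL Q D

/-- Right-hand sides of rules of a macro tree transducer with states `Q` and output
alphabet `D`: `out d ts` is an output symbol with subtrees, `param j` is the context
parameter `y_{j+1}`, and `call q i ps` is a state call `q(x_{i+1}, ps)`. -/
inductive MRhs (Q D : Type) : Type
  | out : D → List (MRhs Q D) → MRhs Q D
  | param : ℕ → MRhs Q D
  | call : Q → ℕ → List (MRhs Q D) → MRhs Q D

/-- Well-formedness of a right-hand side for a rule of a state with `m` parameters
and an input symbol of rank `k`: output symbols have the right number of children,
parameters are among `y_1, …, y_m`, input variables are among `x_1, …, x_k`, and a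
call of state `q'` passes exactly `prm q'` parameter trees. -/
inductive RhsWF {Q D : Type} (rkD : D → ℕ) (prm : Q → ℕ) (k m : ℕ) : MRhs Q D → Prop
  | out {d ts} : ts.length = rkD d → (∀ t ∈ ts, RhsWF rkD prm k m t) →
      RhsWF rkD prm k m (.out d ts)
  | param {j} : j < m → RhsWF rkD prm k m (.param j)
  | call {q i ps} : i < k → ps.length = prm q → (∀ t ∈ ps, RhsWF rkD prm k m t) →
      RhsWF rkD prm k m (.call q i ps)

/-- A deterministic macro tree transducer with states `Q`, input alphabet `(S, rkS)`
and output alphabet `(D, rkD)`.  `prm q` is the number of context parameters of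
state `q` (so `q` has rank `prm q + 1`); `rules q σ` is the right-hand side of the
`(q,σ)`-rule, if present (determinism: at most one rule per pair). -/
structure MTT (Q S D : Type) where
  rkS : S → ℕ
  rkD : D → ℕ
  prm : Q → ℕ
  init : Q
  rules : Q → S → Option (MRhs Q D)

namespace MTT

variable {Q S D : Type}

/-- `M` is a well-formed macro tree transducer: the initial state has rank one and
all right-hand sides are well-formed. -/
def Proper (M : MTT Q S D) : Prop :=
  M.prm M.init = 0 ∧
    ∀ q σ r, M.rules q σ = some r → RhsWF M.rkD M.prm (M.rkS σ) (M.prm q) r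

/-- `M` is total: there is exactly one rule for every state and input symbol. -/
def Total (M : MTT Q S D) : Prop := ∀ q σ, (M.rules q σ).isSome

end MTT

/-- A top-down tree transducer is a macro tree transducer each of whose states has
rank one, i.e. no context parameters. -/
def IsTopDown {Q S D : Type} (M : MTT Q S D) : Prop := ∀ q, M.prm q = 0

/-- A macro tree transducer is monadic if its input and output ranked alphabets
only contain symbols of rank 1 and rank 0. -/
def MTT.Monadic {Q S D : Type} (M : MTT Q S D) : Prop :=
  (∀ σ, M.rkS σ ≤ 1) ∧ (∀ d, M.rkD d ≤ 1)

variable {Q S D : Type}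

mutual
  /-- Second-order substitution of the parameter leaves `y_{j+1}` of a sentential
  form by the trees `vs`. -/
  def psubst (vs : List (RTree (PL Q D))) : RTree (PL Q D) → RTree (PL Q D)
    | .node (.pr j) _ => vs.getD j (.node (.pr j) [])
    | .node (.out d) ts => .node (.out d) (psubstList vs ts)
    | .node (.st q) ts => .node (.st q) (psubstList vs ts)
  def psubstList (vs : List (RTree (PL Q D))) :
      List (RTree (PL Q D)) → List (RTree (PL Q D))
    | [] => []
    | t :: ts => psubst vs t :: psubstList vs ts
end

/-- The fresh rank-0 input symbol `x` used in partial inputs `s[u ← x]`. -/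
def xLeaf {S : Type} : RTree (Option S) := .node none []

mutual
  /-- Big-step semantics of a macro tree transducer: `MEval M q s t` means that the
  computation of `M` started in state `q` on the input tree `s` (a tree over
  `Option S`, where `none` is the fresh symbol `x` of partial inputs) produces the
  (sentential form) tree `t`.  On the symbol `x` the computation blocks, yielding
  the unresolved call `q(x, y_1, …, y_m)`.  For `s ∈ T_Σ` (no occurrence of `x`)
  and well-formed transducers, `t` contains no `PL.st` labels, and `M_q(s)` is
  defined iff such a `t` exists; determinism makes `t` unique. -/
  inductive MEval (M : MTT Q S D) : Q → RTree (Option S) → RTree (PL Q D) → Prop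
    | atX (q : Q) :
        MEval M q (.node none [])
          (.node (.st q) ((List.range (M.prm q)).map fun j => .node (.pr j) []))
    | step {q : Q} {σ : S} {ss : List (RTree (Option S))} {r : MRhs Q D}
        {t : RTree (PL Q D)} :
        M.rules q σ = some r → MExpand M ss r t → MEval M q (.node (some σ) ss) t

  /-- Evaluation of a right-hand side with current input subtrees `ss`. -/
  inductive MExpand (M : MTT Q S D) :
      List (RTree (Option S)) → MRhs Q D → RTree (PL Q D) → Prop
    | out {ss d ts us} : MExpandList M ss ts us →
        MExpand M ss (.out d ts) (.node (.out d) us)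
    | param {ss j} : MExpand M ss (.param j) (.node (.pr j) [])
    | call {ss : List (RTree (Option S))} {q : Q} {i : ℕ} {ps : List (MRhs Q D)}
        {si : RTree (Option S)} {vs : List (RTree (PL Q D))} {u : RTree (PL Q D)} :
        ss[i]? = some si → MExpandList M ss ps vs → MEval M q si u →
        MExpand M ss (.call q i ps) (psubst vs u)

  inductive MExpandList (M : MTT Q S D) :
      List (RTree (Option S)) → List (MRhs Q D) → List (RTree (PL Q D)) → Prop
    | nil {ss} : MExpandList M ss [] []
    | cons {ss t ts u us} : MExpand M ss t u → MExpandList M ss ts us →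
        MExpandList M ss (t :: ts) (u :: us)
end

/-- The translation `τ_M ⊆ T_Σ × T_Δ` realized by a macro tree transducer `M`
(the graph of the partial function `τ_M : T_Σ ⇀ T_Δ`). -/
def MTT.tau (M : MTT Q S D) : Set (RTree S × RTree D) :=
  {p | RTree.WF M.rkS p.1 ∧ MEval M M.init (RTree.map some p.1) (RTree.map PL.out p.2)}

/-! ## Statement 3

The concrete transducers `M` and `N` of Figure 2.  Input alphabet
`Σ = {a⁽¹⁾, e⁽⁰⁾}` encoded as `Bool` with `a = true`, `e = false`; output alphabet
`Δ = {d⁽²⁾, e⁽⁰⁾}` encoded as `Bool` with `d = true`, `e = false`. -/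

/-- Rank function of `Σ = {a⁽¹⁾, e⁽⁰⁾}`. -/
def rkSig : Bool → ℕ := fun b => cond b 1 0

/-- Rank function of `Δ = {d⁽²⁾, e⁽⁰⁾}`. -/
def rkDel : Bool → ℕ := fun b => cond b 2 0

/-- The transducer `M` with the single state `q0` and rules
`q0(a(x1)) → d(q0(x1), q0(x1))` and `q0(e) → e`. -/
def Mex : MTT Unit Bool Bool where
  rkS := rkSig
  rkD := rkDel
  prm := fun _ => 0
  init := ()
  rules := fun _ σ =>
    match σ with
    | true => some (.out true [.call () 0 [], .call () 0 []])
    | false => some (.out false [])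

/-- The transducer `N` with states `p0 = false` (initial) and `p = true` and rules
`p0(a(x1)) → p(x1)`, `p0(e) → e`, `p(a(x1)) → d(p(x1), p(x1))`, `p(e) → d(e,e)`. -/
def Nex : MTT Bool Bool Bool where
  rkS := rkSig
  rkD := rkDel
  prm := fun _ => 0
  init := false
  rules := fun q σ =>
    match q, σ with
    | false, true => some (.call true 0 [])
    | false, false => some (.out false [])
    | true, true => some (.out true [.call true 0 [], .call true 0 []])
    | true, false => some (.out true [.out false [], .out false []])

section Aux
open RTree

/-- `a^k(b)`. -/
def achain (b : RTree (Option Bool)) : ℕ → RTree (Option Bool)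
  | 0 => b
  | k+1 => .node (some true) [achain b k]

def e0 : RTree (Option Bool) := .node (some false) []

def chainB : ℕ → RTree Bool
  | 0 => .node false []
  | n+1 => .node true [chainB n]

/-- Full binary tree with inner label `d` and copies of `l` at the leaves. -/
def full {β : Type} (d : β) (l : RTree β) : ℕ → RTree β
  | 0 => l
  | n+1 => .node d [full d l n, full d l n]

def FbB (n : ℕ) : RTree Bool := full true (.node false []) n

lemma map_chainB (n : ℕ) : RTree.map some (chainB n) = achain e0 n := by
  induction n with
  | zero => simp [chainB, achain, e0, RTree.map, RTree.mapList]
  | succ n ih => simp [chainB, achain, RTree.map, RTree.mapList, ih]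

lemma wf_chainB (n : ℕ) : RTree.WF rkSig (chainB n) := by
  induction n with
  | zero => exact WF.node (by simp [rkSig]) (by simp)
  | succ n ih => exact WF.node (by simp [rkSig]) (by simpa using ih)

lemma chainB_of_wf : ∀ {s : RTree Bool}, RTree.WF rkSig s → ∃ n, s = chainB n := by
  intro s h
  induction h with
  | @node a ts hlen hwf ih =>
    cases a with
    | false =>
      have : ts = [] := List.length_eq_zero_iff.mp (by simpa [rkSig] using hlen)
      exact ⟨0, by simp [this, chainB]⟩
    | true =>
      obtain ⟨t, rfl⟩ := List.length_eq_one_iff.mp (by simpa [rkSig] using hlen)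
      obtain ⟨n, rfl⟩ := ih t (by simp)
      exact ⟨n+1, by simp [chainB]⟩

mutual
theorem map_inj {α β : Type} {f : α → β} (hf : Function.Injective f) :
    ∀ t1 t2 : RTree α, RTree.map f t1 = RTree.map f t2 → t1 = t2
  | .node a ts, .node b us, h => by
    simp only [RTree.map] at h
    injection h with h1 h2
    exact congrArg₂ RTree.node (hf h1) (mapList_inj hf ts us h2)
theorem mapList_inj {α β : Type} {f : α → β} (hf : Function.Injective f) :
    ∀ ts us : List (RTree α), RTree.mapList f ts = RTree.mapList f us → ts = us
  | [], [], _ => rfl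
  | [], _ :: _, h => by simp [RTree.mapList] at h
  | _ :: _, [], h => by simp [RTree.mapList] at h
  | t :: ts, u :: us, h => by
    simp only [RTree.mapList] at h
    injection h with h1 h2
    exact congrArg₂ List.cons (map_inj hf t u h1) (mapList_inj hf ts us h2)
end

end Aux

section Aux2
open RTree

def eT (Q : Type) : RTree (PL Q Bool) := .node (.out false) []
def stMq : RTree (PL Unit Bool) := .node (.st ()) []
def stNq : RTree (PL Bool Bool) := .node (.st true) []
def dee (Q : Type) : RTree (PL Q Bool) := .node (.out true) [eT Q, eT Q]
def dT {Q : Type} : PL Q Bool := PL.out true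

lemma psubst_full {Q : Type} (l : RTree (PL Q Bool))
    (hl : psubst [] l = l) :
    ∀ k, psubst [] (full (dT (Q := Q)) l k) = full dT l k := by
  intro k
  induction k with
  | zero => exact hl
  | succ k ih => simp [full, dT, psubst, psubstList] at ih ⊢; exact ih

lemma psubst_eT (Q : Type) : psubst [] (eT Q) = eT Q := by
  simp [eT, psubst, psubstList]

lemma psubst_stMq : psubst [] stMq = stMq := by simp [stMq, psubst, psubstList]
lemma psubst_stNq : psubst [] stNq = stNq := by simp [stNq, psubst, psubstList]
lemma psubst_dee (Q : Type) : psubst [] (dee Q) = dee Q := by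
  simp [dee, eT, psubst, psubstList]

lemma mapOut_FbB (Q : Type) (n : ℕ) :
    RTree.map (PL.out : Bool → PL Q Bool) (FbB n) = full dT (eT Q) n := by
  induction n with
  | zero => simp [FbB, full, eT, RTree.map, RTree.mapList]
  | succ n ih => simpa [FbB, full, dT, RTree.map, RTree.mapList] using ih

lemma full_shift {β : Type} (d : β) (l : RTree β) :
    ∀ n, full d (.node d [l, l]) n = full d l (n+1) := by
  intro n
  induction n with
  | zero => simp [full]
  | succ n ih => simp [full] at ih ⊢; exact ih

/-- Characterization of `M`'s runs on chains with base `b`. -/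
lemma chM_achain {b : RTree (Option Bool)} {l : RTree (PL Unit Bool)}
    (hb : ∀ ξ, MEval Mex () b ξ → ξ = l) (hl : psubst [] l = l) :
    ∀ k ξ, MEval Mex () (achain b k) ξ → ξ = full dT l k := by
  intro k
  induction k with
  | zero => exact hb
  | succ k ih =>
    intro ξ h
    cases h with
    | step hr he =>
      have hreq := Option.some.inj hr
      subst hreq
      cases he with
      | out hus =>
        cases hus with
        | cons h1 hus2 =>
          cases hus2 with
          | cons h2 hus3 =>
            cases hus3
            cases h1 with
            | call hsi hvs hev =>
              cases h2 with
              | call hsi' hvs' hev' =>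
                cases hvs; cases hvs'
                simp only [List.getElem?_cons_zero, Option.some.injEq] at hsi hsi'
                subst hsi; subst hsi'
                rw [ih _ hev, ih _ hev', psubst_full _ hl]
                rfl

lemma baseM_e : ∀ ξ, MEval Mex () e0 ξ → ξ = eT Unit := by
  intro ξ h
  cases h with
  | step hr he =>
    have hreq := Option.some.inj hr
    subst hreq
    cases he with
    | out hus => cases hus; rfl

lemma baseM_x : ∀ ξ, MEval Mex () (.node none []) ξ → ξ = stMq := by
  intro ξ h
  cases h with
  | atX => simp [Mex, stMq]

/-- Existence of `M`'s runs. -/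
lemma exM_achain {b : RTree (Option Bool)} {l : RTree (PL Unit Bool)}
    (hb : MEval Mex () b l) (hl : psubst [] l = l) :
    ∀ k, MEval Mex () (achain b k) (full dT l k) := by
  intro k
  induction k with
  | zero => exact hb
  | succ k ih =>
    have hc : MExpand Mex [achain b k] (.call () 0 [])
        (psubst [] (full dT l k)) :=
      MExpand.call rfl MExpandList.nil ih
    rw [psubst_full _ hl] at hc
    exact MEval.step rfl (MExpand.out (MExpandList.cons hc
      (MExpandList.cons hc MExpandList.nil)))

lemma exM_e : MEval Mex () e0 (eT Unit) :=
  MEval.step rfl (MExpand.out MExpandList.nil)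

lemma exM_x : MEval Mex () (.node none []) stMq := by
  simpa [Mex, stMq] using MEval.atX (M := Mex) ()

end Aux2

section Aux3
open RTree

/-- Characterization of `N`'s runs in state `p = true` on chains with base `b`. -/
lemma chNp_achain {b : RTree (Option Bool)} {l : RTree (PL Bool Bool)}
    (hb : ∀ ξ, MEval Nex true b ξ → ξ = l) (hl : psubst [] l = l) :
    ∀ k ξ, MEval Nex true (achain b k) ξ → ξ = full dT l k := by
  intro k
  induction k with
  | zero => exact hb
  | succ k ih =>
    intro ξ h
    cases h with
    | step hr he =>
      have hreq := Option.some.inj hr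
      subst hreq
      cases he with
      | out hus =>
        cases hus with
        | cons h1 hus2 =>
          cases hus2 with
          | cons h2 hus3 =>
            cases hus3
            cases h1 with
            | call hsi hvs hev =>
              cases h2 with
              | call hsi' hvs' hev' =>
                cases hvs; cases hvs'
                simp only [List.getElem?_cons_zero, Option.some.injEq] at hsi hsi'
                subst hsi; subst hsi'
                rw [ih _ hev, ih _ hev', psubst_full _ hl]
                rfl

lemma baseNp_e : ∀ ξ, MEval Nex true e0 ξ → ξ = dee Bool := by
  intro ξ h
  cases h with
  | step hr he =>
    have hreq := Option.some.inj hr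
    subst hreq
    cases he with
    | out hus =>
      cases hus with
      | cons h1 hus2 =>
        cases hus2 with
        | cons h2 hus3 =>
          cases hus3
          cases h1 with
          | out hv1 =>
            cases h2 with
            | out hv2 => cases hv1; cases hv2; rfl

lemma baseNp_x : ∀ ξ, MEval Nex true (.node none []) ξ → ξ = stNq := by
  intro ξ h
  cases h with
  | atX => simp [Nex, stNq]

lemma exNp_achain {b : RTree (Option Bool)} {l : RTree (PL Bool Bool)}
    (hb : MEval Nex true b l) (hl : psubst [] l = l) :
    ∀ k, MEval Nex true (achain b k) (full dT l k) := by
  intro k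
  induction k with
  | zero => exact hb
  | succ k ih =>
    have hc : MExpand Nex [achain b k] (.call true 0 [])
        (psubst [] (full dT l k)) :=
      MExpand.call rfl MExpandList.nil ih
    rw [psubst_full _ hl] at hc
    exact MEval.step rfl (MExpand.out (MExpandList.cons hc
      (MExpandList.cons hc MExpandList.nil)))

lemma exNp_e : MEval Nex true e0 (dee Bool) :=
  MEval.step rfl (MExpand.out (MExpandList.cons (MExpand.out MExpandList.nil)
    (MExpandList.cons (MExpand.out MExpandList.nil) MExpandList.nil)))

lemma exNp_x : MEval Nex true (.node none []) stNq := by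
  simpa [Nex, stNq] using MEval.atX (M := Nex) true

/-- `N`'s initial state on `a^{k+1}(b)`. -/
lemma chN0_succ {b : RTree (Option Bool)} {l : RTree (PL Bool Bool)}
    (hb : ∀ ξ, MEval Nex true b ξ → ξ = l) (hl : psubst [] l = l) :
    ∀ k ξ, MEval Nex false (achain b (k+1)) ξ → ξ = full dT l k := by
  intro k ξ h
  cases h with
  | step hr he =>
    have hreq := Option.some.inj hr
    subst hreq
    cases he with
    | call hsi hvs hev =>
      cases hvs
      simp only [List.getElem?_cons_zero, Option.some.injEq] at hsi
      subst hsi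
      rw [chNp_achain hb hl _ _ hev, psubst_full _ hl]

lemma exN0_succ {b : RTree (Option Bool)} {l : RTree (PL Bool Bool)}
    (hb : MEval Nex true b l) (hl : psubst [] l = l) (k : ℕ) :
    MEval Nex false (achain b (k+1)) (full dT l k) := by
  have hc : MExpand Nex [achain b k] (.call true 0 [])
      (psubst [] (full dT l k)) :=
    MExpand.call rfl MExpandList.nil (exNp_achain hb hl k)
  rw [psubst_full _ hl] at hc
  exact MEval.step rfl hc

lemma baseN0_e : ∀ ξ, MEval Nex false e0 ξ → ξ = eT Bool := by
  intro ξ h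
  cases h with
  | step hr he =>
    have hreq := Option.some.inj hr
    subst hreq
    cases he with
    | out hus => cases hus; rfl

lemma exN0_e : MEval Nex false e0 (eT Bool) :=
  MEval.step rfl (MExpand.out MExpandList.nil)

lemma baseN0_x : ∀ ξ, MEval Nex false (.node none []) ξ → ξ = .node (.st false) [] := by
  intro ξ h
  cases h with
  | atX => simp [Nex]

end Aux3

section Aux4
open RTree

lemma tauM (p : RTree Bool × RTree Bool) :
    p ∈ MTT.tau Mex ↔ ∃ n, p.1 = chainB n ∧ p.2 = FbB n := by
  constructor
  · rintro ⟨hwf, hev⟩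
    obtain ⟨n, hn⟩ := chainB_of_wf hwf
    rw [hn, map_chainB] at hev
    have h := chM_achain baseM_e (psubst_eT Unit) n _ hev
    rw [← mapOut_FbB] at h
    exact ⟨n, hn, map_inj (fun a b hab => by injection hab) _ _ h⟩
  · rintro ⟨n, h1, h2⟩
    refine ⟨h1 ▸ wf_chainB n, ?_⟩
    rw [h1, h2, map_chainB, mapOut_FbB]
    exact exM_achain exM_e (psubst_eT Unit) n

lemma dee_eq : dee Bool = .node dT [eT Bool, eT Bool] := rfl

lemma tauN (p : RTree Bool × RTree Bool) :
    p ∈ MTT.tau Nex ↔ ∃ n, p.1 = chainB n ∧ p.2 = FbB n := by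
  constructor
  · rintro ⟨hwf, hev⟩
    obtain ⟨n, hn⟩ := chainB_of_wf hwf
    rw [hn, map_chainB] at hev
    have h : RTree.map PL.out p.2 = full dT (eT Bool) n := by
      cases n with
      | zero => exact baseN0_e _ hev
      | succ n =>
        have h := chN0_succ baseNp_e (psubst_dee Bool) n _ hev
        rw [dee_eq, full_shift] at h
        exact h
    rw [← mapOut_FbB] at h
    exact ⟨n, hn, map_inj (fun a b hab => by injection hab) _ _ h⟩
  · rintro ⟨n, h1, h2⟩
    refine ⟨h1 ▸ wf_chainB n, ?_⟩
    rw [h1, h2, map_chainB, mapOut_FbB]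
    cases n with
    | zero => exact exN0_e
    | succ n =>
      have h := exN0_succ exNp_e (psubst_dee Bool) n
      rw [dee_eq, full_shift] at h
      exact h

lemma replace_chain : ∀ n u (pt : RTree (Option Bool)),
    ReplaceAt (achain e0 n) u xLeaf pt → ∃ k, pt = achain xLeaf k := by
  intro n
  induction n with
  | zero =>
    intro u pt h
    cases h with
    | here => exact ⟨0, rfl⟩
    | child hti _ => simp at hti
  | succ n ih =>
    intro u pt h
    cases h with
    | here => exact ⟨0, rfl⟩
    | @child _ _ i _ _ ti _ hti hrep =>
      cases i with
      | zero =>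
        simp only [List.getElem?_cons_zero, Option.some.injEq] at hti
        subst hti
        obtain ⟨k, rfl⟩ := ih _ _ hrep
        exact ⟨k+1, by simp [achain]⟩
      | succ i => simp at hti

lemma replace_leaf : ∀ n, ReplaceAt (achain e0 n) (List.replicate n 0) xLeaf (achain xLeaf n) := by
  intro n
  induction n with
  | zero => exact .here _ _
  | succ n ih =>
    have h := ReplaceAt.child (a := some true) (ts := [achain e0 n]) (i := 0)
      (u := List.replicate n 0) rfl ih
    simpa [achain, List.replicate] using h

lemma height_full {β : Type} (d : β) (l : RTree β) :
    ∀ n, RTree.height (full d l n) = n + RTree.height l := by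
  intro n
  induction n with
  | zero => simp [full]
  | succ n ih => simp [full, RTree.height, RTree.heightList, ih]; omega

lemma size_full {β : Type} (d : β) (l : RTree β) :
    ∀ n, RTree.size (full d l n) + 1 = 2^n * (RTree.size l + 1) := by
  intro n
  induction n with
  | zero => simp [full]
  | succ n ih =>
    simp only [full, RTree.size, RTree.sizeList]
    rw [pow_succ]
    linarith [ih]

end Aux4

/-- `M` and `N` are equivalent, their height-balance on every partial input
`s[u←x]` (with `s` in the common domain and `u` a node of `s`) is bounded by `1`,
but no constant bounds their size-balance. -/
theorem example_unbounded_size_balance :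
    MTT.tau Mex = MTT.tau Nex ∧
    (∀ s u pt, (∃ t, (s, t) ∈ MTT.tau Mex) →
      RTree.ReplaceAt (RTree.map some s) u xLeaf pt →
      ∀ ξ1 ξ2, MEval Mex Mex.init pt ξ1 → MEval Nex Nex.init pt ξ2 →
        |(ξ1.height : ℤ) - (ξ2.height : ℤ)| ≤ 1) ∧
    ¬ ∃ c : ℕ, ∀ s u pt, (∃ t, (s, t) ∈ MTT.tau Mex) →
      RTree.ReplaceAt (RTree.map some s) u xLeaf pt →
      ∀ ξ1 ξ2, MEval Mex Mex.init pt ξ1 → MEval Nex Nex.init pt ξ2 →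
        |(ξ1.size : ℤ) - (ξ2.size : ℤ)| ≤ c := by
  refine ⟨?_, ?_, ?_⟩
  · exact Set.ext fun p => (tauM p).trans (tauN p).symm
  · rintro s u pt ⟨t, hst⟩ hrep ξ1 ξ2 h1 h2
    obtain ⟨n, hn, -⟩ := (tauM (s, t)).mp hst
    have hn' : s = chainB n := hn
    rw [hn', map_chainB] at hrep
    obtain ⟨k, rfl⟩ := replace_chain n u _ hrep
    have e1 : ξ1 = full dT stMq k := chM_achain baseM_x psubst_stMq k _ h1
    subst e1
    cases k with
    | zero =>
      have e2 := baseN0_x _ h2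
      subst e2
      norm_num [full, stMq, RTree.height, RTree.heightList]
    | succ k =>
      have e2 : ξ2 = full dT stNq k := chN0_succ baseNp_x psubst_stNq k _ h2
      subst e2
      rw [height_full, height_full]
      rw [show RTree.height stMq = 1 from rfl, show RTree.height stNq = 1 from rfl]
      rw [abs_sub_le_iff]
      constructor <;> · push_cast; omega
  · rintro ⟨c, hc⟩
    have h := hc (chainB (c+1)) (List.replicate (c+1) 0) (achain xLeaf (c+1))
      ⟨FbB (c+1), (tauM _).mpr ⟨c+1, rfl, rfl⟩⟩
      (by rw [map_chainB]; exact replace_leaf (c+1))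
      (full dT stMq (c+1)) (full dT stNq c)
      (exM_achain exM_x psubst_stMq (c+1))
      (exN0_succ exNp_x psubst_stNq c)
    rw [abs_le] at h
    obtain ⟨-, h2⟩ := h
    have e1 := size_full (dT (Q := Unit)) stMq (c+1)
    have e2 := size_full (dT (Q := Bool)) stNq c
    rw [show RTree.size stMq = 1 from rfl] at e1
    rw [show RTree.size stNq = 1 from rfl] at e2
    rw [pow_succ] at e1
    have hc2 : c < 2^c := Nat.lt_two_pow_self
    generalize hB : (2:ℕ)^c = B at e1 e2 hc2
    omega
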